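/- Let α ∈ (0, 1/2] and define ρ₂(x₁,x₂) = (1/α)·√(|x₁-x₂|² + |√(α²-x₁²) - √(α²-x₂²)|²) on [-α,α], and for t₁, t₂ ∈ [0,π] let x_i = arcsin((sin α)·cos t_i) and ρ₃(x₁,x₂) = |t₁ - t₂|. Then there is an absolute constant C > 0, independent of α, t₁, t₂, such that C⁻¹·|t₁-t₂| ≤ ρ₂(x₁,x₂) ≤ C·|t₁-t₂|. -/

import Mathlib

open Real

lemma my_abs_sin_le (z : ℝ) : |Real.sin z| ≤ |z| := by
  have key : ∀ w : ℝ, 0 ≤ w → |Real.sin w| ≤ w := by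
    intro w hw
    rw [abs_le]
    refine ⟨?_, Real.sin_le hw⟩
    rcases le_total w 1 with h | h
    · have : 0 ≤ Real.sin w := Real.sin_nonneg_of_nonneg_of_le_pi hw
        (h.trans (by linarith [Real.pi_gt_three]))
      linarith
    · linarith [Real.neg_one_le_sin w]
  rcases le_total 0 z with h | h
  · rw [abs_of_nonneg h]; exact key z h
  · rw [abs_of_nonpos h]
    have := key (-z) (by linarith)
    rwa [Real.sin_neg, abs_neg] at this

lemma my_sin_lip (a b : ℝ) : |Real.sin a - Real.sin b| ≤ |a - b| := by
  rw [Real.sin_sub_sin]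
  have h1 := my_abs_sin_le ((a - b) / 2)
  have h2 := abs_cos_le_one ((a + b) / 2)
  calc |2 * Real.sin ((a - b) / 2) * Real.cos ((a + b) / 2)|
      = 2 * |Real.sin ((a - b) / 2)| * |Real.cos ((a + b) / 2)| := by
        rw [abs_mul, abs_mul]; norm_num
    _ ≤ 2 * |(a - b) / 2| * 1 := by
        apply mul_le_mul (by nlinarith [abs_nonneg (Real.sin ((a-b)/2))]) h2
          (abs_nonneg _) (by positivity)
    _ = |a - b| := by rw [mul_one, abs_div, abs_two]; ring

lemma my_arcsin_expand {a b : ℝ} (ha : |a| ≤ 1) (hb : |b| ≤ 1) :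
    |a - b| ≤ |Real.arcsin a - Real.arcsin b| := by
  rw [abs_le] at ha hb
  have := my_sin_lip (Real.arcsin a) (Real.arcsin b)
  rwa [Real.sin_arcsin ha.1 ha.2, Real.sin_arcsin hb.1 hb.2] at this

lemma sin_half_le_half : Real.sin (1/2) ≤ 1/2 := Real.sin_le (by norm_num)

lemma sin_half_pos : 0 < Real.sin (1/2) :=
  Real.sin_pos_of_pos_of_lt_pi (by norm_num) (by linarith [Real.pi_gt_three])

lemma my_arcsin_lip {a b : ℝ} (ha : |a| ≤ Real.sin (1/2)) (hb : |b| ≤ Real.sin (1/2)) :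
    |Real.arcsin a - Real.arcsin b| ≤ 2 * |a - b| := by
  set S : Set ℝ := Set.Icc (-Real.sin (1/2)) (Real.sin (1/2)) with hS
  have hmem : ∀ x ∈ S, |x| ≤ 1/2 := by
    intro x hx
    rw [abs_le]
    exact ⟨by linarith [hx.1, sin_half_le_half], by linarith [hx.2, sin_half_le_half]⟩
  have hderiv : ∀ x ∈ S, HasDerivWithinAt Real.arcsin (1 / Real.sqrt (1 - x^2)) S x := by
    intro x hx
    have h := abs_le.mp (hmem x hx)
    exact (Real.hasDerivAt_arcsin (by linarith [h.1]) (by linarith [h.2])).hasDerivWithinAt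
  have hbound : ∀ x ∈ S, ‖1 / Real.sqrt (1 - x^2)‖ ≤ 2 := by
    intro x hx
    have h := abs_le.mp (hmem x hx)
    have h1 : (1:ℝ)/4 ≤ 1 - x^2 := by nlinarith
    have h2 : (1:ℝ)/2 ≤ Real.sqrt (1 - x^2) := by
      have := Real.sqrt_le_sqrt h1
      rwa [show (1:ℝ)/4 = (1/2)^2 by norm_num, Real.sqrt_sq (by norm_num)] at this
    rw [Real.norm_eq_abs, abs_of_nonneg (by positivity), div_le_iff₀ (by linarith)]
    linarith
  have := (convex_Icc _ _).norm_image_sub_le_of_norm_hasDerivWithin_le hderiv hbound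
    (x := b) (y := a) (abs_le.mp hb) (abs_le.mp ha)
  simpa [Real.norm_eq_abs] using this

lemma arcsin_pt {c : ℝ} (hc0 : 0 ≤ c) (hc : c ≤ Real.sin (1/2)) :
    c ≤ Real.arcsin c ∧ Real.arcsin c ≤ 2 * c := by
  have hcabs : |c| ≤ Real.sin (1/2) := by rwa [abs_of_nonneg hc0]
  have hc1 : c ≤ 1 := by linarith [sin_half_le_half]
  have hx0 : 0 ≤ Real.arcsin c := Real.arcsin_nonneg.2 hc0
  constructor
  · have := my_arcsin_expand (a := c) (b := 0) (by rw [abs_of_nonneg hc0]; exact hc1) (by simp)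
    rwa [Real.arcsin_zero, sub_zero, sub_zero, abs_of_nonneg hc0, abs_of_nonneg hx0] at this
  · have := my_arcsin_lip (a := c) (b := 0) hcabs (by simpa using sin_half_pos.le)
    rwa [Real.arcsin_zero, sub_zero, sub_zero, abs_of_nonneg hc0, abs_of_nonneg hx0] at this

lemma sin_le_sin_half' {α : ℝ} (h0 : 0 < α) (h2 : α ≤ 1/2) : Real.sin α ≤ Real.sin (1/2) :=
  Real.sin_le_sin_of_le_of_le_pi_div_two (by linarith [Real.pi_gt_three])
    (by linarith [Real.pi_gt_three]) h2

lemma LYpoint {α c : ℝ} (h0 : 0 < α) (h2 : α ≤ 1/2) (hc0 : 0 ≤ c) (hcs : c ≤ Real.sin α) :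
    Real.sin α ^ 2 - c ^ 2 ≤ α ^ 2 - Real.arcsin c ^ 2 ∧
    α ^ 2 - Real.arcsin c ^ 2 ≤ 4 * (Real.sin α ^ 2 - c ^ 2) := by
  have hπ := Real.pi_gt_three
  set s := Real.sin α with hs
  have hs0 : 0 < s := Real.sin_pos_of_pos_of_lt_pi h0 (by linarith)
  have hs12 : s ≤ Real.sin (1/2) := sin_le_sin_half' h0 h2
  have hs1 : s ≤ 1/2 := hs12.trans sin_half_le_half
  have hαs : Real.arcsin s = α := Real.arcsin_sin (by linarith) (by linarith)
  have hcabs : |c| ≤ Real.sin (1/2) := by rw [abs_of_nonneg hc0]; linarith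
  have hsabs : |s| ≤ Real.sin (1/2) := by rw [abs_of_nonneg hs0.le]; linarith
  have hncabs : |(-c)| ≤ Real.sin (1/2) := by rwa [abs_neg]
  have hxc0 : 0 ≤ Real.arcsin c := Real.arcsin_nonneg.2 hc0
  have hxcα : Real.arcsin c ≤ α := by
    rw [← hαs]; exact Real.monotone_arcsin hcs
  set x := Real.arcsin c with hx
  have A1 : s - c ≤ α - x := by
    have := my_arcsin_expand (a := s) (b := c)
      (by rw [abs_of_nonneg hs0.le]; linarith) (by rw [abs_of_nonneg hc0]; linarith)
    rw [hαs] at this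
    rwa [abs_of_nonneg (by linarith), abs_of_nonneg (by linarith)] at this
  have A2 : α - x ≤ 2 * (s - c) := by
    have := my_arcsin_lip hsabs hcabs
    rw [hαs] at this
    rwa [abs_of_nonneg (by linarith), abs_of_nonneg (by linarith)] at this
  have A3 : s + c ≤ α + x := by
    have := my_arcsin_expand (a := s) (b := -c)
      (by rw [abs_of_nonneg hs0.le]; linarith) (by rw [abs_neg, abs_of_nonneg hc0]; linarith)
    rw [Real.arcsin_neg, hαs, show s - -c = s + c by ring, show α - -x = α + x by ring] at this
    rwa [abs_of_nonneg (by linarith), abs_of_nonneg (by linarith)] at this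
  have A4 : α + x ≤ 2 * (s + c) := by
    have := my_arcsin_lip hsabs hncabs
    rw [Real.arcsin_neg, hαs, ← hx] at this
    rw [show s - -c = s + c by ring, show α - -x = α + x by ring] at this
    rwa [abs_of_nonneg (by linarith), abs_of_nonneg (by linarith)] at this
  constructor
  · nlinarith [mul_le_mul A1 A3 (by linarith) (by linarith)]
  · nlinarith [mul_le_mul A2 A4 (by linarith) (by linarith)]

lemma LYdiff {α a b : ℝ} (h0 : 0 < α) (h2 : α ≤ 1/2) (ha0 : 0 ≤ a) (hab : a ≤ b)
    (hbs : b ≤ Real.sin α) :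
    Real.sqrt (α^2 - Real.arcsin b ^2) ≤ Real.sqrt (α^2 - Real.arcsin a ^2) ∧
    Real.sqrt (Real.sin α ^2 - b^2) ≤ Real.sqrt (Real.sin α ^2 - a^2) ∧
    Real.sqrt (Real.sin α ^2 - a^2) - Real.sqrt (Real.sin α ^2 - b^2) ≤
      2 * (Real.sqrt (α^2 - Real.arcsin a ^2) - Real.sqrt (α^2 - Real.arcsin b ^2)) ∧
    Real.sqrt (α^2 - Real.arcsin a ^2) - Real.sqrt (α^2 - Real.arcsin b ^2) ≤
      4 * (Real.sqrt (Real.sin α ^2 - a^2) - Real.sqrt (Real.sin α ^2 - b^2)) := by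
  have hπ := Real.pi_gt_three
  set s := Real.sin α with hs
  have hs0 : 0 < s := Real.sin_pos_of_pos_of_lt_pi h0 (by linarith)
  have hs12 : s ≤ Real.sin (1/2) := sin_le_sin_half' h0 h2
  have has : a ≤ s := hab.trans hbs
  have hb0 : 0 ≤ b := ha0.trans hab
  have hVb0 : (0:ℝ) ≤ s^2 - b^2 := by nlinarith
  have hVa0 : (0:ℝ) ≤ s^2 - a^2 := by nlinarith
  obtain ⟨hP1a, hP2a⟩ := LYpoint h0 h2 ha0 has
  obtain ⟨hP1b, hP2b⟩ := LYpoint h0 h2 hb0 hbs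
  set Ya := Real.sqrt (α^2 - Real.arcsin a ^2) with hYa
  set Yb := Real.sqrt (α^2 - Real.arcsin b ^2) with hYb
  set Va := Real.sqrt (s^2 - a^2) with hVa
  set Vb := Real.sqrt (s^2 - b^2) with hVb
  have hYa2 : Ya^2 = α^2 - Real.arcsin a ^2 := Real.sq_sqrt (by linarith)
  have hYb2 : Yb^2 = α^2 - Real.arcsin b ^2 := Real.sq_sqrt (by linarith)
  have hVa2 : Va^2 = s^2 - a^2 := Real.sq_sqrt hVa0
  have hVb2 : Vb^2 = s^2 - b^2 := Real.sq_sqrt hVb0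
  have hYan : 0 ≤ Ya := Real.sqrt_nonneg _
  have hYbn : 0 ≤ Yb := Real.sqrt_nonneg _
  have hVan : 0 ≤ Va := Real.sqrt_nonneg _
  have hVbn : 0 ≤ Vb := Real.sqrt_nonneg _
  -- pointwise V ≤ Y ≤ 2 V
  have hVYa : Va ≤ Ya := Real.sqrt_le_sqrt hP1a
  have hVYb : Vb ≤ Yb := Real.sqrt_le_sqrt hP1b
  have sqrt4 : ∀ z : ℝ, Real.sqrt (4 * z) = 2 * Real.sqrt z := by
    intro z
    rw [show (4:ℝ) = 2^2 by norm_num, Real.sqrt_mul (by positivity), Real.sqrt_sq (by norm_num)]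
  have hYVa : Ya ≤ 2 * Va := by
    have := Real.sqrt_le_sqrt hP2a
    rwa [sqrt4] at this
  have hYVb : Yb ≤ 2 * Vb := by
    have := Real.sqrt_le_sqrt hP2b
    rwa [sqrt4] at this
  -- arcsin bounds
  have hxa0 : 0 ≤ Real.arcsin a := Real.arcsin_nonneg.2 ha0
  have hxb0 : 0 ≤ Real.arcsin b := Real.arcsin_nonneg.2 hb0
  have hxab : Real.arcsin a ≤ Real.arcsin b := Real.monotone_arcsin hab
  have hpa := arcsin_pt ha0 (by linarith)
  have hpb := arcsin_pt hb0 (by linarith)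
  have hlip : Real.arcsin b - Real.arcsin a ≤ 2 * (b - a) := by
    have := my_arcsin_lip (a := b) (b := a)
      (by rw [abs_of_nonneg hb0]; linarith) (by rw [abs_of_nonneg ha0]; linarith)
    rwa [abs_of_nonneg (by linarith), abs_of_nonneg (by linarith)] at this
  have hexp : b - a ≤ Real.arcsin b - Real.arcsin a := by
    have := my_arcsin_expand (a := b) (b := a)
      (by rw [abs_of_nonneg hb0]; linarith [sin_half_le_half])
      (by rw [abs_of_nonneg ha0]; linarith [sin_half_le_half])
    rwa [abs_of_nonneg (by linarith), abs_of_nonneg (by linarith)] at this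
  -- squared difference comparisons
  have B1 : b^2 - a^2 ≤ Real.arcsin b ^2 - Real.arcsin a ^2 := by
    have m := mul_le_mul hexp (show a + b ≤ Real.arcsin a + Real.arcsin b by
      linarith [hpa.1, hpb.1]) (by linarith) (by linarith)
    calc b^2 - a^2 = (b - a) * (a + b) := by ring
      _ ≤ (Real.arcsin b - Real.arcsin a) * (Real.arcsin a + Real.arcsin b) := m
      _ = Real.arcsin b ^2 - Real.arcsin a ^2 := by ring
  have B2 : Real.arcsin b ^2 - Real.arcsin a ^2 ≤ 4 * (b^2 - a^2) := by
    have m := mul_le_mul hlip (show Real.arcsin a + Real.arcsin b ≤ 2 * (a + b) by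
      linarith [hpa.2, hpb.2]) (by linarith) (by linarith)
    calc Real.arcsin b ^2 - Real.arcsin a ^2
        = (Real.arcsin b - Real.arcsin a) * (Real.arcsin a + Real.arcsin b) := by ring
      _ ≤ 2 * (b - a) * (2 * (a + b)) := m
      _ = 4 * (b^2 - a^2) := by ring
  have e1 : (Va - Vb) * (Va + Vb) = b^2 - a^2 := by
    have : (Va - Vb) * (Va + Vb) = Va^2 - Vb^2 := by ring
    rw [this, hVa2, hVb2]; ring
  have e2 : (Ya - Yb) * (Ya + Yb) = Real.arcsin b ^2 - Real.arcsin a ^2 := by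
    have : (Ya - Yb) * (Ya + Yb) = Ya^2 - Yb^2 := by ring
    rw [this, hYa2, hYb2]; ring
  -- orders
  have hYba : Yb ≤ Ya :=
    Real.sqrt_le_sqrt (sub_le_sub_left (pow_le_pow_left₀ hxa0 hxab 2) _)
  have hVba : Vb ≤ Va :=
    Real.sqrt_le_sqrt (sub_le_sub_left (pow_le_pow_left₀ ha0 hab 2) _)
  refine ⟨hYba, hVba, ?_, ?_⟩
  · -- Va - Vb ≤ 2 (Ya - Yb)
    rcases eq_or_lt_of_le (by positivity : (0:ℝ) ≤ Va + Vb) with hz | hz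
    · have h1 : Va = 0 := by linarith
      have h2' : Vb = 0 := by linarith
      rw [h1, h2']; linarith
    · have key : (Va - Vb) * (Va + Vb) ≤ (2 * (Ya - Yb)) * (Va + Vb) := by
        calc (Va - Vb) * (Va + Vb) = b^2 - a^2 := e1
          _ ≤ Real.arcsin b ^2 - Real.arcsin a ^2 := B1
          _ = (Ya - Yb) * (Ya + Yb) := e2.symm
          _ ≤ (Ya - Yb) * (2 * (Va + Vb)) :=
              mul_le_mul_of_nonneg_left (by linarith) (by linarith)
          _ = (2 * (Ya - Yb)) * (Va + Vb) := by ring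
      exact le_of_mul_le_mul_right key hz
  · -- Ya - Yb ≤ 4 (Va - Vb)
    rcases eq_or_lt_of_le (by positivity : (0:ℝ) ≤ Ya + Yb) with hz | hz
    · have h1 : Ya = 0 := by linarith
      have h2' : Yb = 0 := by linarith
      rw [h1, h2']; linarith
    · have key : (Ya - Yb) * (Ya + Yb) ≤ (4 * (Va - Vb)) * (Ya + Yb) := by
        calc (Ya - Yb) * (Ya + Yb) = Real.arcsin b ^2 - Real.arcsin a ^2 := e2
          _ ≤ 4 * (b^2 - a^2) := B2
          _ = (4 * (Va - Vb)) * (Va + Vb) := by rw [← e1]; ring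
          _ ≤ (4 * (Va - Vb)) * (Ya + Yb) :=
              mul_le_mul_of_nonneg_left (by linarith) (by linarith)
      exact le_of_mul_le_mul_right key hz

set_option maxHeartbeats 2000000 in
/-- Equivalence of ρ₂ with the parameter metric ρ₃(x₁,x₂) = |t₁ - t₂|, where
x_i = arcsin((sin α)·cos t_i), with an absolute constant independent of α, t₁, t₂. -/
theorem stmt_2 :
    ∃ C : ℝ, 0 < C ∧ ∀ (α t₁ t₂ : ℝ), 0 < α → α ≤ 1/2 →
      t₁ ∈ Set.Icc (0:ℝ) Real.pi → t₂ ∈ Set.Icc (0:ℝ) Real.pi →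
      C⁻¹ * |t₁ - t₂| ≤
        (1/α) * Real.sqrt (|Real.arcsin (Real.sin α * Real.cos t₁) -
              Real.arcsin (Real.sin α * Real.cos t₂)|^2 +
            |Real.sqrt (α^2 - (Real.arcsin (Real.sin α * Real.cos t₁))^2) -
              Real.sqrt (α^2 - (Real.arcsin (Real.sin α * Real.cos t₂))^2)|^2) ∧
      (1/α) * Real.sqrt (|Real.arcsin (Real.sin α * Real.cos t₁) -
              Real.arcsin (Real.sin α * Real.cos t₂)|^2 +
            |Real.sqrt (α^2 - (Real.arcsin (Real.sin α * Real.cos t₁))^2) -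
              Real.sqrt (α^2 - (Real.arcsin (Real.sin α * Real.cos t₂))^2)|^2)
        ≤ C * |t₁ - t₂| := by
  refine ⟨4, by norm_num, fun α t₁ t₂ hα hα2 ht₁ ht₂ => ?_⟩
  obtain ⟨ht10, ht1π⟩ := ht₁
  obtain ⟨ht20, ht2π⟩ := ht₂
  have hπ := Real.pi_gt_three
  have hπ' : Real.pi < 3.15 := Real.pi_lt_d2
  set s := Real.sin α with hs
  have hs0 : 0 < s := Real.sin_pos_of_pos_of_lt_pi hα (by linarith)
  have hsα : s ≤ α := Real.sin_le hα.le
  have hs12 : s ≤ Real.sin (1/2) := sin_le_sin_half' hα hα2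
  have hs1 : s ≤ 1/2 := hs12.trans sin_half_le_half
  have hsgt : 15/16 * α ≤ s := by
    have h3 := Real.sin_gt_sub_cube hα
    have hα2' : α^2 ≤ 1/4 := by nlinarith
    nlinarith [mul_le_mul_of_nonneg_left hα2' hα.le]
  set u₁ := s * Real.cos t₁ with hu₁
  set u₂ := s * Real.cos t₂ with hu₂
  set x₁ := Real.arcsin u₁ with hx₁
  set x₂ := Real.arcsin u₂ with hx₂
  have hau₁ : |u₁| ≤ s := by
    rw [hu₁, abs_mul, abs_of_nonneg hs0.le]
    nlinarith [abs_cos_le_one t₁, abs_nonneg (Real.cos t₁)]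
  have hau₂ : |u₂| ≤ s := by
    rw [hu₂, abs_mul, abs_of_nonneg hs0.le]
    nlinarith [abs_cos_le_one t₂, abs_nonneg (Real.cos t₂)]
  have hX2 : |x₁ - x₂| ≤ 2 * |u₁ - u₂| :=
    my_arcsin_lip (hau₁.trans hs12) (hau₂.trans hs12)
  have hX1 : |u₁ - u₂| ≤ |x₁ - x₂| :=
    my_arcsin_expand (by linarith [sin_half_le_half]) (by linarith [sin_half_le_half])
  set v₁ := s * Real.sin t₁ with hv₁
  set v₂ := s * Real.sin t₂ with hv₂
  have hsin₁ : 0 ≤ Real.sin t₁ := Real.sin_nonneg_of_nonneg_of_le_pi ht10 ht1π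
  have hsin₂ : 0 ≤ Real.sin t₂ := Real.sin_nonneg_of_nonneg_of_le_pi ht20 ht2π
  have hveq₁ : v₁ = Real.sqrt (s^2 - |u₁|^2) := by
    rw [sq_abs, show s^2 - u₁^2 = (s * Real.sin t₁)^2 from by
      rw [hu₁]; linear_combination (-(s^2)) * Real.sin_sq_add_cos_sq t₁,
      Real.sqrt_sq (mul_nonneg hs0.le hsin₁)]
  have hveq₂ : v₂ = Real.sqrt (s^2 - |u₂|^2) := by
    rw [sq_abs, show s^2 - u₂^2 = (s * Real.sin t₂)^2 from by
      rw [hu₂]; linear_combination (-(s^2)) * Real.sin_sq_add_cos_sq t₂,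
      Real.sqrt_sq (mul_nonneg hs0.le hsin₂)]
  set y₁ := Real.sqrt (α^2 - x₁^2) with hy₁
  set y₂ := Real.sqrt (α^2 - x₂^2) with hy₂
  have hxsq₁ : x₁^2 = Real.arcsin |u₁| ^2 := by
    rcases le_total 0 u₁ with h | h
    · rw [abs_of_nonneg h, hx₁]
    · rw [abs_of_nonpos h, Real.arcsin_neg, neg_sq, hx₁]
  have hxsq₂ : x₂^2 = Real.arcsin |u₂| ^2 := by
    rcases le_total 0 u₂ with h | h
    · rw [abs_of_nonneg h, hx₂]
    · rw [abs_of_nonpos h, Real.arcsin_neg, neg_sq, hx₂]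
  have ey₁ : Real.sqrt (α^2 - Real.arcsin |u₁| ^2) = y₁ := by rw [hy₁, hxsq₁]
  have ey₂ : Real.sqrt (α^2 - Real.arcsin |u₂| ^2) = y₂ := by rw [hy₂, hxsq₂]
  have ev₁ : Real.sqrt (s^2 - |u₁|^2) = v₁ := hveq₁.symm
  have ev₂ : Real.sqrt (s^2 - |u₂|^2) = v₂ := hveq₂.symm
  have hY : |v₁ - v₂| ≤ 2 * |y₁ - y₂| ∧ |y₁ - y₂| ≤ 4 * |v₁ - v₂| := by
    rcases le_total |u₁| |u₂| with h | h
    · obtain ⟨o1, o2, c1, c2⟩ := LYdiff hα hα2 (abs_nonneg u₁) h hau₂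
      rw [ey₁, ey₂] at o1 c1 c2
      rw [ev₁, ev₂] at o2 c1 c2
      rw [abs_of_nonneg (sub_nonneg.2 o1), abs_of_nonneg (sub_nonneg.2 o2)]
      exact ⟨c1, c2⟩
    · obtain ⟨o1, o2, c1, c2⟩ := LYdiff hα hα2 (abs_nonneg u₂) h hau₁
      rw [ey₁, ey₂] at o1 c1 c2
      rw [ev₁, ev₂] at o2 c1 c2
      rw [abs_sub_comm y₁ y₂, abs_sub_comm v₁ v₂,
        abs_of_nonneg (sub_nonneg.2 o1), abs_of_nonneg (sub_nonneg.2 o2)]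
      exact ⟨c1, c2⟩
  obtain ⟨hY1, hY2⟩ := hY
  -- trig identity
  have hTπ : |t₁ - t₂| ≤ Real.pi := abs_le.2 ⟨by linarith, by linarith⟩
  have hT0 : 0 ≤ |t₁ - t₂| := abs_nonneg _
  have hsq : Real.sin ((t₁ - t₂)/2)^2 = (1 - Real.cos (t₁ - t₂))/2 := by
    have h1 := Real.cos_sq ((t₁ - t₂)/2)
    rw [show 2 * ((t₁ - t₂)/2) = t₁ - t₂ from by ring] at h1
    have h2 := Real.sin_sq_add_cos_sq ((t₁ - t₂)/2)
    linarith
  have habs2 : Real.sin (|t₁ - t₂|/2)^2 = Real.sin ((t₁ - t₂)/2)^2 := by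
    rcases le_total 0 (t₁ - t₂) with h | h
    · rw [abs_of_nonneg h]
    · rw [abs_of_nonpos h, show -(t₁ - t₂)/2 = -((t₁ - t₂)/2) from by ring,
        Real.sin_neg, neg_sq]
  have hFe : |u₁ - u₂|^2 + |v₁ - v₂|^2 = 4 * s^2 * Real.sin (|t₁ - t₂|/2)^2 := by
    rw [sq_abs, sq_abs, habs2, hsq, hu₁, hu₂, hv₁, hv₂]
    have hcs := Real.cos_sub t₁ t₂
    have h1 := Real.sin_sq_add_cos_sq t₁
    have h2 := Real.sin_sq_add_cos_sq t₂
    linear_combination (s^2) * h1 + (s^2) * h2 + 2 * s^2 * hcs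
  have hsinT : 0 ≤ Real.sin (|t₁ - t₂|/2) :=
    Real.sin_nonneg_of_nonneg_of_le_pi (by positivity) (by linarith)
  have hsin_ub : Real.sin (|t₁ - t₂|/2) ≤ |t₁ - t₂|/2 := Real.sin_le (by positivity)
  have hsin_lb : 2/Real.pi * (|t₁ - t₂|/2) ≤ Real.sin (|t₁ - t₂|/2) :=
    Real.mul_le_sin (by positivity) (by linarith)
  set E := |x₁ - x₂|^2 + |y₁ - y₂|^2 with hE
  clear_value s u₁ u₂ x₁ x₂ v₁ v₂ y₁ y₂ E
  have hE_ub : Real.sqrt E ≤ 8 * s * Real.sin (|t₁ - t₂|/2) := by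
    have a1 : |x₁ - x₂|^2 ≤ 4 * |u₁ - u₂|^2 := by
      calc |x₁ - x₂|^2 ≤ (2 * |u₁ - u₂|)^2 := pow_le_pow_left₀ (abs_nonneg _) hX2 2
        _ = 4 * |u₁ - u₂|^2 := by ring
    have a2 : |y₁ - y₂|^2 ≤ 16 * |v₁ - v₂|^2 := by
      calc |y₁ - y₂|^2 ≤ (4 * |v₁ - v₂|)^2 := pow_le_pow_left₀ (abs_nonneg _) hY2 2
        _ = 16 * |v₁ - v₂|^2 := by ring
    have h1 : E ≤ 64 * s^2 * Real.sin (|t₁ - t₂|/2)^2 := by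
      have := sq_nonneg (|u₁ - u₂|)
      have := sq_nonneg (|v₁ - v₂|)
      linarith
    calc Real.sqrt E ≤ Real.sqrt (64 * s^2 * Real.sin (|t₁ - t₂|/2)^2) :=
          Real.sqrt_le_sqrt h1
      _ = 8 * s * Real.sin (|t₁ - t₂|/2) := by
          rw [show 64 * s^2 * Real.sin (|t₁ - t₂|/2)^2
              = (8 * s * Real.sin (|t₁ - t₂|/2))^2 from by ring,
            Real.sqrt_sq (by positivity)]
  have hE_lb : s * Real.sin (|t₁ - t₂|/2) ≤ Real.sqrt E := by
    have a1 : |u₁ - u₂|^2 ≤ |x₁ - x₂|^2 := pow_le_pow_left₀ (abs_nonneg _) hX1 2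
    have a2 : |v₁ - v₂|^2 ≤ 4 * |y₁ - y₂|^2 := by
      calc |v₁ - v₂|^2 ≤ (2 * |y₁ - y₂|)^2 := pow_le_pow_left₀ (abs_nonneg _) hY1 2
        _ = 4 * |y₁ - y₂|^2 := by ring
    have h1 : (s * Real.sin (|t₁ - t₂|/2))^2 ≤ E := by
      have e : (s * Real.sin (|t₁ - t₂|/2))^2 = s^2 * Real.sin (|t₁ - t₂|/2)^2 := by ring
      rw [hE, e]
      linarith [a1, a2, hFe, sq_nonneg (|u₁ - u₂|), sq_nonneg (|v₁ - v₂|)]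
    calc s * Real.sin (|t₁ - t₂|/2)
        = Real.sqrt ((s * Real.sin (|t₁ - t₂|/2))^2) :=
          (Real.sqrt_sq (mul_nonneg hs0.le hsinT)).symm
      _ ≤ Real.sqrt E := Real.sqrt_le_sqrt h1
  constructor
  · rw [show (1/α) * Real.sqrt E = Real.sqrt E / α from by ring, le_div_iff₀ hα]
    have hπ0 : (0:ℝ) < Real.pi := Real.pi_pos
    have h1 : (15/16 * α) * Real.sin (|t₁ - t₂|/2) ≤ s * Real.sin (|t₁ - t₂|/2) :=
      mul_le_mul_of_nonneg_right hsgt hsinT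
    have hTP : |t₁ - t₂| ≤ Real.pi * Real.sin (|t₁ - t₂|/2) := by
      have h := mul_le_mul_of_nonneg_left hsin_lb hπ0.le
      rwa [show Real.pi * (2/Real.pi * (|t₁ - t₂|/2)) = |t₁ - t₂| from by
        field_simp <;> ring] at h
    have k1 : Real.pi * Real.sin (|t₁ - t₂|/2) ≤ 3.15 * Real.sin (|t₁ - t₂|/2) :=
      mul_le_mul_of_nonneg_right hπ'.le hsinT
    have k2 : (4:ℝ)⁻¹ * |t₁ - t₂| ≤ 15/16 * Real.sin (|t₁ - t₂|/2) := by linarith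
    have h2 : (4:ℝ)⁻¹ * |t₁ - t₂| * α ≤ 15/16 * Real.sin (|t₁ - t₂|/2) * α :=
      mul_le_mul_of_nonneg_right k2 hα.le
    have h3 : 15/16 * Real.sin (|t₁ - t₂|/2) * α = (15/16 * α) * Real.sin (|t₁ - t₂|/2) := by
      ring
    linarith
  · rw [show (1/α) * Real.sqrt E = Real.sqrt E / α from by ring, div_le_iff₀ hα]
    have m : s * Real.sin (|t₁ - t₂|/2) ≤ α * (|t₁ - t₂|/2) :=
      mul_le_mul hsα hsin_ub hsinT hα.le
    linarith
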